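/- Consider a sequence of real heights h(0), h(1), h(2), ... constructed greedily: h(0) = 0, and at each step n one may choose h(n+1) = h(n) + u or h(n+1) = h(n) − d where u, d ∈ [α, M'] may vary with n, choosing + when h(n) − βn ≤ 0 and − when 0 < h(n) − βn ≤ J', where J' = M' + α and 0 < β ≤ α ≤ M'. Then for all n, |h(n) − βn| ≤ J', provided |h(1) − β| ≤ J' holds initially. -/
import Mathlib


/-- The greedy height sequence stays within J' of the linear function β·n. -/
theorem greedy_slope_control (α β M' J' : ℝ) (h : ℕ → ℝ)
    (hβ : 0 < β) (hβα : β ≤ α) (hαM : α ≤ M') (hJ' : J' = M' + α)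
    (h0 : h 0 = 0)
    (hstep : ∀ n : ℕ,
      (h n - β * n ≤ 0 → ∃ u ∈ Set.Icc α M', h (n + 1) = h n + u) ∧
      (0 < h n - β * n → h n - β * n ≤ J' → ∃ d ∈ Set.Icc α M', h (n + 1) = h n - d))
    (h1 : |h 1 - β| ≤ J') :
    ∀ n : ℕ, |h n - β * n| ≤ J' := by
  intro n
  induction n with
  | zero =>
    simp [h0, abs_le]
    nlinarith
  | succ n ih =>
    rw [abs_le] at ih ⊢
    push_cast
    rcases le_or_gt (h n - β * n) 0 with hle | hpos
    · obtain ⟨u, ⟨hu1, hu2⟩, heq⟩ := (hstep n).1 hle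
      rw [heq]
      constructor <;> nlinarith
    · obtain ⟨d, ⟨hd1, hd2⟩, heq⟩ := (hstep n).2 hpos ih.2
      rw [heq]
      constructor <;> nlinarith
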